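/- Let A be an n×n positive definite Hermitian matrix and let p_L, p_U be real polynomials with 0 ≤ p_L(x) ≤ f(x) ≤ p_U(x) for all x in the spectrum of A, where f : ℝ → ℝ. Assume p_L(A) is positive definite with spectrum in [m_L, M_L] (0 < m_L < M_L) and p_U(A) has spectrum in [m_U, M_U] (0 < m_U < M_U). Then for any integer r ≥ 2: K(m_L, M_L, r)^{-1} · p_L(A)^r ≤ f(A)^r ≤ K(m_U, M_U, r) · p_U(A)^r, where K is the Kantorovich function. -/

import Mathlib

open Matrix ComplexOrder Real

/-- The Kantorovich function `K(m, M, r)`. -/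
noncomputable def kantorovich (m M r : ℝ) : ℝ :=
  (m * M ^ r - M * m ^ r) / ((r - 1) * (M - m)) *
    ((r - 1) * (M ^ r - m ^ r) / (r * (m * M ^ r - M * m ^ r))) ^ r

/- Auxiliary scalar lemmas -/

lemma aux_geom_lb {m M : ℝ} (hm : 0 < m) (hmM : m < M) (r : ℕ) :
    (r : ℝ) * m ^ (r - 1) * (M - m) ≤ M ^ r - m ^ r := by
  have hM : (0:ℝ) < M := hm.trans hmM
  have key := geom_sum₂_mul M m r
  have hsum : (r : ℝ) * m ^ (r - 1) ≤ ∑ i ∈ Finset.range r, M ^ i * m ^ (r - 1 - i) := by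
    have h1 : ∀ i ∈ Finset.range r, m ^ (r - 1) ≤ M ^ i * m ^ (r - 1 - i) := by
      intro i hi
      rw [Finset.mem_range] at hi
      have e : m ^ (r - 1) = m ^ i * m ^ (r - 1 - i) := by
        rw [← pow_add]; congr 1; omega
      rw [e]
      exact mul_le_mul_of_nonneg_right (pow_le_pow_left₀ hm.le hmM.le i)
        (pow_nonneg hm.le _)
    calc (r : ℝ) * m ^ (r - 1) = ∑ _i ∈ Finset.range r, m ^ (r - 1) := by
          rw [Finset.sum_const, Finset.card_range, nsmul_eq_mul]
      _ ≤ _ := Finset.sum_le_sum h1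
  calc (r : ℝ) * m ^ (r - 1) * (M - m)
      ≤ (∑ i ∈ Finset.range r, M ^ i * m ^ (r - 1 - i)) * (M - m) :=
        mul_le_mul_of_nonneg_right hsum (by linarith)
    _ = M ^ r - m ^ r := key

lemma aux_geom_ub {m M : ℝ} (hm : 0 < m) (hmM : m < M) (r : ℕ) :
    M ^ r - m ^ r ≤ (r : ℝ) * M ^ (r - 1) * (M - m) := by
  have hM : (0:ℝ) < M := hm.trans hmM
  have key := geom_sum₂_mul M m r
  have hsum : (∑ i ∈ Finset.range r, M ^ i * m ^ (r - 1 - i)) ≤ (r : ℝ) * M ^ (r - 1) := by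
    have h1 : ∀ i ∈ Finset.range r, M ^ i * m ^ (r - 1 - i) ≤ M ^ (r - 1) := by
      intro i hi
      rw [Finset.mem_range] at hi
      have e : M ^ (r - 1) = M ^ i * M ^ (r - 1 - i) := by
        rw [← pow_add]; congr 1; omega
      rw [e]
      exact mul_le_mul_of_nonneg_left (pow_le_pow_left₀ hm.le hmM.le _)
        (pow_nonneg hM.le _)
    calc (∑ i ∈ Finset.range r, M ^ i * m ^ (r - 1 - i))
        ≤ ∑ _i ∈ Finset.range r, M ^ (r - 1) := Finset.sum_le_sum h1
      _ = (r : ℝ) * M ^ (r - 1) := by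
          rw [Finset.sum_const, Finset.card_range, nsmul_eq_mul]
  calc M ^ r - m ^ r = (∑ i ∈ Finset.range r, M ^ i * m ^ (r - 1 - i)) * (M - m) := key.symm
    _ ≤ (r : ℝ) * M ^ (r - 1) * (M - m) := mul_le_mul_of_nonneg_right hsum (by linarith)

lemma one_le_kantorovich {m M : ℝ} (hm : 0 < m) (hmM : m < M) {r : ℕ} (hr : 2 ≤ r) :
    1 ≤ kantorovich m M (r : ℝ) := by
  have hM : (0:ℝ) < M := hm.trans hmM
  have hMm : (0:ℝ) < M - m := sub_pos.2 hmM
  have hs2 : (2:ℝ) ≤ (r : ℝ) := by exact_mod_cast hr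
  have hs1 : (0:ℝ) < (r : ℝ) - 1 := by linarith
  have hs0 : (0:ℝ) < (r : ℝ) := by linarith
  have hd : (0:ℝ) < M ^ r - m ^ r :=
    sub_pos.2 (pow_lt_pow_left₀ hmM hm.le (by omega))
  have hPQ : m ^ (r - 1) < M ^ (r - 1) := pow_lt_pow_left₀ hmM hm.le (by omega)
  have eM : M ^ r = M * M ^ (r - 1) := by
    rw [← pow_succ']; congr 1; omega
  have em : m ^ r = m * m ^ (r - 1) := by
    rw [← pow_succ']; congr 1; omega
  have hc : (0:ℝ) < m * M ^ r - M * m ^ r := by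
    rw [eM, em]; nlinarith [mul_pos hm hM]
  -- the maximizer μ
  set μ : ℝ := (r : ℝ) * (m * M ^ r - M * m ^ r) / (((r : ℝ) - 1) * (M ^ r - m ^ r)) with hμdef
  have hden : (0:ℝ) < ((r : ℝ) - 1) * (M ^ r - m ^ r) := mul_pos hs1 hd
  have hμpos : 0 < μ := div_pos (mul_pos hs0 hc) hden
  have hlb := aux_geom_lb hm hmM r
  have hub := aux_geom_ub hm hmM r
  have hmμ : m ≤ μ := by
    rw [hμdef, le_div_iff₀ hden]
    nlinarith [mul_le_mul_of_nonneg_left hlb hm.le]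
  have hμM : μ ≤ M := by
    rw [hμdef, div_le_iff₀ hden]
    nlinarith [mul_le_mul_of_nonneg_left hub hM.le]
  -- convexity of x ^ r gives μ ^ r ≤ chord value
  set a : ℝ := (M - μ) / (M - m) with hadef
  set b : ℝ := (μ - m) / (M - m) with hbdef
  have ha : 0 ≤ a := div_nonneg (by linarith) hMm.le
  have hb : 0 ≤ b := div_nonneg (by linarith) hMm.le
  have hab : a + b = 1 := by
    rw [hadef, hbdef, ← add_div, div_eq_one_iff_eq hMm.ne']; ring
  have hconv := (convexOn_pow r).2 (Set.mem_Ici.2 hm.le) (Set.mem_Ici.2 hM.le) ha hb hab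
  simp only [smul_eq_mul] at hconv
  have hμeq : a * m + b * M = μ := by
    rw [hadef, hbdef]; field_simp; ring
  rw [hμeq] at hconv
  have hLval : a * m ^ r + b * M ^ r
      = (m * M ^ r - M * m ^ r) / (((r : ℝ) - 1) * (M - m)) := by
    rw [hadef, hbdef, hμdef]
    field_simp
    ring
  have hμr : μ ^ r ≤ (m * M ^ r - M * m ^ r) / (((r : ℝ) - 1) * (M - m)) := by
    rw [← hLval]; exact hconv
  have hKform : kantorovich m M (r : ℝ)
      = (m * M ^ r - M * m ^ r) / (((r : ℝ) - 1) * (M - m)) * (1 / μ) ^ r := by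
    unfold kantorovich
    simp only [Real.rpow_natCast]
    congr 2
    rw [hμdef, one_div_div]
  calc (1:ℝ) = μ ^ r * (1 / μ) ^ r := by
        rw [← mul_pow, mul_one_div, div_self hμpos.ne', one_pow]
    _ ≤ (m * M ^ r - M * m ^ r) / (((r : ℝ) - 1) * (M - m)) * (1 / μ) ^ r :=
        mul_le_mul_of_nonneg_right hμr (pow_nonneg (by positivity) r)
    _ = kantorovich m M (r : ℝ) := hKform.symm

/- Auxiliary matrix lemmas about `Matrix.IsHermitian.cfc` -/

section cfcAux

variable {n : Type*} [Fintype n] [DecidableEq n] {A : Matrix n n ℂ} (hA : A.IsHermitian)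

lemma cfc_mul_cfc (g h : ℝ → ℝ) :
    hA.cfc g * hA.cfc h = hA.cfc (fun x => g x * h x) := by
  simp only [Matrix.IsHermitian.cfc, Unitary.conjStarAlgAut_apply]
  set U : Matrix n n ℂ := (hA.eigenvectorUnitary : Matrix n n ℂ) with hU
  have hsU : star U * U = 1 := Unitary.coe_star_mul_self _
  have key : ∀ D1 D2 : Matrix n n ℂ, (U * D1 * star U) * (U * D2 * star U)
      = U * (D1 * D2) * star U := by
    intro D1 D2
    calc (U * D1 * star U) * (U * D2 * star U)
        = U * (D1 * ((star U * U) * (D2 * star U))) := by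
          simp only [Matrix.mul_assoc]
      _ = U * (D1 * D2) * star U := by
          rw [hsU, one_mul]; simp only [Matrix.mul_assoc]
  rw [key, diagonal_mul_diagonal]
  have hfun : (fun i => (RCLike.ofReal ∘ g ∘ hA.eigenvalues) i
        * (RCLike.ofReal ∘ h ∘ hA.eigenvalues) i)
      = (RCLike.ofReal ∘ (fun x => g x * h x) ∘ hA.eigenvalues : n → ℂ) := by
    funext i; simp [Function.comp]
  rw [hfun]

lemma cfc_pow_eq (g : ℝ → ℝ) (r : ℕ) :
    hA.cfc g ^ r = hA.cfc (fun x => g x ^ r) := by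
  induction r with
  | zero =>
    simp only [pow_zero]
    simp only [Matrix.IsHermitian.cfc, Unitary.conjStarAlgAut_apply]
    have h1 : (RCLike.ofReal ∘ (fun _ : ℝ => (1:ℝ)) ∘ hA.eigenvalues : n → ℂ)
        = fun _ => 1 := by
      funext i; simp [Function.comp]
    rw [h1, diagonal_one, mul_one]
    exact (Unitary.coe_mul_star_self _).symm
  | succ k ih =>
    rw [pow_succ, ih, cfc_mul_cfc]
    simp only [← pow_succ]

lemma smul_cfc (c : ℝ) (g : ℝ → ℝ) :
    c • hA.cfc g = hA.cfc (fun x => c * g x) := by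
  simp only [Matrix.IsHermitian.cfc, Unitary.conjStarAlgAut_apply]
  have hfun : (RCLike.ofReal ∘ (fun x => c * g x) ∘ hA.eigenvalues : n → ℂ)
      = c • (RCLike.ofReal ∘ g ∘ hA.eigenvalues : n → ℂ) := by
    funext i; simp [Function.comp, Complex.real_smul]
  rw [hfun, diagonal_smul, Matrix.mul_smul, Matrix.smul_mul]

lemma cfc_sub_cfc (g h : ℝ → ℝ) :
    hA.cfc g - hA.cfc h = hA.cfc (fun x => g x - h x) := by
  simp only [Matrix.IsHermitian.cfc, Unitary.conjStarAlgAut_apply]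
  rw [← Matrix.sub_mul, ← Matrix.mul_sub, diagonal_sub]
  have hfun : (fun i => (RCLike.ofReal ∘ g ∘ hA.eigenvalues) i
        - (RCLike.ofReal ∘ h ∘ hA.eigenvalues) i)
      = (RCLike.ofReal ∘ (fun x => g x - h x) ∘ hA.eigenvalues : n → ℂ) := by
    funext i; simp [Function.comp]
  rw [hfun]

lemma cfc_posSemidef (g : ℝ → ℝ) (hg : ∀ i, 0 ≤ g (hA.eigenvalues i)) :
    (hA.cfc g).PosSemidef := by
  simp only [Matrix.IsHermitian.cfc, Unitary.conjStarAlgAut_apply]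
  rw [Matrix.star_eq_conjTranspose]
  apply Matrix.PosSemidef.mul_mul_conjTranspose_same
  refine Matrix.posSemidef_diagonal_iff.mpr fun i => ?_
  simp only [Function.comp]
  rw [RCLike.ofReal_nonneg]
  exact hg i

end cfcAux

theorem stmt_17 {n : ℕ} {A : Matrix (Fin n) (Fin n) ℂ} (hA : A.PosDef)
    (f : ℝ → ℝ) (pL pU : Polynomial ℝ)
    (hbounds : ∀ i, 0 ≤ pL.eval (hA.1.eigenvalues i) ∧
      pL.eval (hA.1.eigenvalues i) ≤ f (hA.1.eigenvalues i) ∧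
      f (hA.1.eigenvalues i) ≤ pU.eval (hA.1.eigenvalues i))
    (mL ML mU MU : ℝ) (hmL : 0 < mL) (hLo : mL < ML) (hmU : 0 < mU) (hUo : mU < MU)
    (hLpos : (hA.1.cfc (fun x => pL.eval x)).PosDef)
    (hLherm : (hA.1.cfc (fun x => pL.eval x)).IsHermitian)
    (hUherm : (hA.1.cfc (fun x => pU.eval x)).IsHermitian)
    (hLspec : ∀ i, hLherm.eigenvalues i ∈ Set.Icc mL ML)
    (hUspec : ∀ i, hUherm.eigenvalues i ∈ Set.Icc mU MU)
    (r : ℕ) (hr : 2 ≤ r) :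
    ((hA.1.cfc f) ^ r - (kantorovich mL ML (r : ℝ))⁻¹ •
        (hA.1.cfc (fun x => pL.eval x)) ^ r).PosSemidef ∧
      (kantorovich mU MU (r : ℝ) • (hA.1.cfc (fun x => pU.eval x)) ^ r -
        (hA.1.cfc f) ^ r).PosSemidef := by
  have hKL : 1 ≤ kantorovich mL ML (r : ℝ) := one_le_kantorovich hmL hLo hr
  have hKU : 1 ≤ kantorovich mU MU (r : ℝ) := one_le_kantorovich hmU hUo hr
  have hKLpos : 0 < kantorovich mL ML (r : ℝ) := lt_of_lt_of_le one_pos hKL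
  constructor
  · rw [cfc_pow_eq, cfc_pow_eq, smul_cfc, cfc_sub_cfc]
    apply cfc_posSemidef
    intro i
    obtain ⟨h0, h1, _⟩ := hbounds i
    have ht : pL.eval (hA.1.eigenvalues i) ^ r ≤ f (hA.1.eigenvalues i) ^ r :=
      pow_le_pow_left₀ h0 h1 r
    have hinv : (kantorovich mL ML (r : ℝ))⁻¹ ≤ 1 := inv_le_one_of_one_le₀ hKL
    have h2 : (kantorovich mL ML (r : ℝ))⁻¹ * pL.eval (hA.1.eigenvalues i) ^ r
        ≤ pL.eval (hA.1.eigenvalues i) ^ r :=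
      mul_le_of_le_one_left (pow_nonneg h0 r) hinv
    simp only [sub_nonneg]
    exact h2.trans ht
  · rw [cfc_pow_eq, cfc_pow_eq, smul_cfc, cfc_sub_cfc]
    apply cfc_posSemidef
    intro i
    obtain ⟨h0, h1, h2⟩ := hbounds i
    have hf0 : 0 ≤ f (hA.1.eigenvalues i) := h0.trans h1
    have ht : f (hA.1.eigenvalues i) ^ r ≤ pU.eval (hA.1.eigenvalues i) ^ r :=
      pow_le_pow_left₀ hf0 h2 r
    have h3 : pU.eval (hA.1.eigenvalues i) ^ r
        ≤ kantorovich mU MU (r : ℝ) * pU.eval (hA.1.eigenvalues i) ^ r :=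
      le_mul_of_one_le_left (pow_nonneg (hf0.trans h2) r) hKU
    simp only [sub_nonneg]
    exact ht.trans h3
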